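/- Let (X,d) be a non-separable perfect metric space (no isolated points). Then (ω₁ + 1)^{ω₁} embeds topologically into (CL(X), τ_{w(d)}), the hyperspace of nonempty closed subsets of X with the Wijsman topology. -/

import Mathlib

/-- The hyperspace of nonempty closed subsets of `X`. -/
def CL (X : Type*) [TopologicalSpace X] : Type _ := {A : Set X // A.Nonempty ∧ IsClosed A}

/-- The Wijsman topology on `CL X`: the weakest topology making `A ↦ d(x, A)`
continuous for every `x : X`. -/
noncomputable def WijsmanTopology (X : Type*) [MetricSpace X] : TopologicalSpace (CL X) :=
  ⨅ x : X, TopologicalSpace.induced (fun A : CL X => Metric.infDist x A.1) inferInstance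

open Metric Set

namespace Stmt16Aux

variable {X : Type*} [MetricSpace X] {S : Type*}

/-- In a nonseparable metric space there is an `ε`-separated uncountable set. -/
lemma exists_sep (hsep : ¬ TopologicalSpace.SeparableSpace X) :
    ∃ ε : ℝ, 0 < ε ∧ ∃ Y : Set X, ¬ Y.Countable ∧
      Y.Pairwise (fun a b => ε ≤ dist a b) := by
  by_contra h
  push_neg at h
  have h' : ∀ ε : ℝ, 0 < ε → ∀ Y : Set X,
      Y.Pairwise (fun a b => ε ≤ dist a b) → Y.Countable := by
    intro ε hε Y hp
    by_contra hc
    exact h ε hε Y hc hp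
  apply hsep
  have key : ∀ n : ℕ, ∃ M : Set X,
      M.Pairwise (fun a b => (1/(n+1) : ℝ) ≤ dist a b) ∧
      ∀ x : X, ∃ y ∈ M, dist x y < 1/(n+1) := by
    intro n
    have hpos : (0:ℝ) < 1/(n+1) := by positivity
    obtain ⟨M, hM⟩ := zorn_subset
      {T : Set X | T.Pairwise (fun a b => (1/(n+1) : ℝ) ≤ dist a b)} (by
        intro c hc hchain
        refine ⟨⋃₀ c, ?_, fun s hs => subset_sUnion_of_mem hs⟩
        intro a ha b hb hab
        obtain ⟨s₁, hs₁, ha₁⟩ := ha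
        obtain ⟨s₂, hs₂, hb₂⟩ := hb
        rcases hchain.total hs₁ hs₂ with hsub | hsub
        · exact hc hs₂ (hsub ha₁) hb₂ hab
        · exact hc hs₁ ha₁ (hsub hb₂) hab)
    refine ⟨M, hM.prop, ?_⟩
    intro x
    by_cases hx : x ∈ M
    · exact ⟨x, hx, by simpa using hpos⟩
    · by_contra hno
      push_neg at hno
      have hins : (insert x M) ∈
          {T : Set X | T.Pairwise (fun a b => (1/(n+1) : ℝ) ≤ dist a b)} := by
        show (insert x M).Pairwise _
        rw [Set.pairwise_insert]
        refine ⟨hM.prop, fun b hb hne => ?_⟩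
        have := hno b hb
        constructor
        · linarith [this]
        · rw [dist_comm]; linarith [this]
      have := hM.2 hins (subset_insert x M)
      exact hx (this (mem_insert x M))
  choose M hM1 hM2 using key
  refine ⟨⟨⋃ n, M n, ?_, ?_⟩⟩
  · exact countable_iUnion fun n => h' _ (by positivity) _ (hM1 n)
  · rw [Metric.dense_iff]
    intro x r hr
    obtain ⟨n, hn⟩ := exists_nat_one_div_lt hr
    obtain ⟨y, hy, hdy⟩ := hM2 n x
    refine ⟨y, mem_ball.mpr ?_, mem_iUnion.mpr ⟨n, hy⟩⟩
    rw [dist_comm]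
    exact lt_trans hdy hn

/-- The auxiliary "absorbing" part of the background set. -/
def auxC (ε : ℝ) (y z : S → X) : Set X :=
  {x | (∃ R : ℝ, {s : S | dist x (y s) ≤ R}.Infinite) ∧ ∀ t : S, ε/32 ≤ dist x (z t)}

/-- The background set, part of every member of the embedded family. -/
def auxB (ε : ℝ) (y z : S → X) : Set X := closure (Set.range y ∪ auxC ε y z)

lemma auxB_nonempty [Nonempty S] (ε : ℝ) (y z : S → X) : (auxB ε y z).Nonempty :=
  ⟨y (Classical.arbitrary S), subset_closure (Or.inl ⟨_, rfl⟩)⟩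

lemma sep_isClosed {c : ℝ} (hc : 0 < c) {W : Set X}
    (hW : ∀ a ∈ W, ∀ b ∈ W, a ≠ b → c ≤ dist a b) : IsClosed W := by
  rw [← closure_subset_iff_isClosed]
  intro x hx
  obtain ⟨w₀, hw₀W, hw₀⟩ := Metric.mem_closure_iff.mp hx (c/2) (by linarith)
  have hsmall : ∀ t : ℝ, 0 < t → dist x w₀ < t := by
    intro t ht
    obtain ⟨w, hwW, hw⟩ := Metric.mem_closure_iff.mp hx (min (c/2) t) (lt_min (by linarith) ht)
    have hww : w = w₀ := by
      by_contra hne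
      have h1 := hW w hwW w₀ hw₀W hne
      have h2 : dist w w₀ ≤ dist x w + dist x w₀ := dist_triangle_left _ _ _
      have h3 : dist x w < c/2 := lt_of_lt_of_le hw (min_le_left _ _)
      linarith
    rw [← hww]
    exact lt_of_lt_of_le hw (min_le_right _ _)
  have : x = w₀ := by
    rw [← dist_le_zero]
    by_contra hpos
    push_neg at hpos
    exact absurd (hsmall _ hpos) (lt_irrefl _)
  rw [this]; exact hw₀W

section Main

variable (ε : ℝ) (y z : S → X)

lemma zy_bound (hε : 0 < ε) (hy : ∀ s t : S, s ≠ t → ε ≤ dist (y s) (y t))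
    (hzd : ∀ s, dist (z s) (y s) ≤ ε/16) (s : S) :
    ∀ p ∈ auxB ε y z, min (dist (z s) (y s)) (ε/32) ≤ dist (z s) p := by
  have hcl : IsClosed {p : X | min (dist (z s) (y s)) (ε/32) ≤ dist (z s) p} :=
    isClosed_le continuous_const (continuous_const.dist continuous_id)
  intro p hp
  refine closure_minimal ?_ hcl hp
  rintro q (⟨t, rfl⟩ | hq)
  · simp only [mem_setOf_eq]
    by_cases hts : t = s
    · subst hts; exact min_le_left _ _
    · have h1 := hy s t (fun h => hts h.symm)
      have h2 := dist_triangle (y s) (z s) (y t)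
      have h3 : dist (y s) (z s) = dist (z s) (y s) := dist_comm _ _
      have h4 := hzd s
      have h6 : ε/32 ≤ dist (z s) (y t) := by linarith
      exact le_trans (min_le_right _ _) h6
  · simp only [mem_setOf_eq]
    have h5 := hq.2 s
    rw [dist_comm (z s) q]
    exact le_trans (min_le_right _ _) h5

lemma z_notmem_auxB (hε : 0 < ε) (hy : ∀ s t : S, s ≠ t → ε ≤ dist (y s) (y t))
    (hzy : ∀ s, z s ≠ y s) (hzd : ∀ s, dist (z s) (y s) ≤ ε/16) (s : S) :
    z s ∉ auxB ε y z := by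
  intro h
  have h1 := zy_bound ε y z hε hy hzd s (z s) h
  rw [dist_self] at h1
  have h2 : 0 < dist (z s) (y s) := dist_pos.mpr (hzy s)
  have h3 : (0:ℝ) < ε/32 := by linarith
  have := lt_min h2 h3
  linarith

lemma z_sep (hε : 0 < ε) (hy : ∀ s t : S, s ≠ t → ε ≤ dist (y s) (y t))
    (hzd : ∀ s, dist (z s) (y s) ≤ ε/16) {s t : S} (hst : s ≠ t) :
    7*ε/8 ≤ dist (z s) (z t) := by
  have h1 := hy s t hst
  have h2 : dist (y s) (y t) ≤ dist (y s) (z s) + dist (z s) (z t) + dist (z t) (y t) :=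
    dist_triangle4 _ _ _ _
  have h3 : dist (y s) (z s) = dist (z s) (y s) := dist_comm _ _
  have h4 := hzd s
  have h5 := hzd t
  linarith

lemma z_inj (hε : 0 < ε) (hy : ∀ s t : S, s ≠ t → ε ≤ dist (y s) (y t))
    (hzd : ∀ s, dist (z s) (y s) ≤ ε/16) : Function.Injective z := by
  intro s t h
  by_contra hne
  have := z_sep ε y z hε hy hzd hne
  rw [h, dist_self] at this
  linarith

/-- The family member corresponding to a set of active slots. -/
def PhiSet (u : Set S) : Set X := auxB ε y z ∪ z '' u

lemma PhiSet_closed (hε : 0 < ε) (hy : ∀ s t : S, s ≠ t → ε ≤ dist (y s) (y t))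
    (hzd : ∀ s, dist (z s) (y s) ≤ ε/16) (u : Set S) : IsClosed (PhiSet ε y z u) := by
  refine IsClosed.union isClosed_closure (sep_isClosed (c := 7*ε/8) (by linarith) ?_)
  rintro a ⟨s, _, rfl⟩ b ⟨t, _, rfl⟩ hab
  exact z_sep ε y z hε hy hzd (fun h => hab (by rw [h]))

lemma PhiSet_nonempty [Nonempty S] (u : Set S) : (PhiSet ε y z u).Nonempty :=
  (auxB_nonempty ε y z).mono subset_union_left

lemma mem_PhiSet_z_iff (hε : 0 < ε) (hy : ∀ s t : S, s ≠ t → ε ≤ dist (y s) (y t))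
    (hzy : ∀ s, z s ≠ y s) (hzd : ∀ s, dist (z s) (y s) ≤ ε/16) (u : Set S) (s : S) :
    z s ∈ PhiSet ε y z u ↔ s ∈ u := by
  constructor
  · rintro (hB | ⟨t, ht, hts⟩)
    · exact absurd hB (z_notmem_auxB ε y z hε hy hzy hzd s)
    · rwa [← z_inj ε y z hε hy hzd hts]
  · intro hs
    exact Or.inr ⟨s, hs, rfl⟩

lemma finite_bad (hε : 0 < ε) (hy : ∀ s t : S, s ≠ t → ε ≤ dist (y s) (y t))
    (hzd : ∀ s, dist (z s) (y s) ≤ ε/16) (x : X) {δ : ℝ} (hδ : 0 < δ) :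
    {s : S | dist x (z s) < infDist x (auxB ε y z) - δ}.Finite := by
  by_contra hinf
  have hinf' : {s : S | dist x (z s) < infDist x (auxB ε y z) - δ}.Infinite := hinf
  set dB := infDist x (auxB ε y z) with hdB
  by_cases hc : ∀ t : S, ε/32 ≤ dist x (z t)
  · have hxC : x ∈ auxC ε y z := by
      refine ⟨⟨dB + ε/16, ?_⟩, hc⟩
      refine hinf'.mono ?_
      intro s hs
      have h1 : dist x (y s) ≤ dist x (z s) + dist (z s) (y s) := dist_triangle _ _ _
      have h2 := hzd s
      simp only [mem_setOf_eq] at hs ⊢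
      linarith
    have hdB0 : dB = 0 := infDist_zero_of_mem (subset_closure (Or.inr hxC))
    obtain ⟨s, hs⟩ := hinf'.nonempty
    simp only [mem_setOf_eq, hdB0] at hs
    linarith [dist_nonneg (x := x) (y := z s)]
  · push_neg at hc
    obtain ⟨t, ht⟩ := hc
    have hyt : y t ∈ auxB ε y z := subset_closure (Or.inl ⟨t, rfl⟩)
    have hdBle : dB ≤ dist x (y t) := infDist_le_dist_of_mem hyt
    have h1 : dist x (y t) ≤ dist x (z t) + dist (z t) (y t) := dist_triangle _ _ _
    have h2 := hzd t
    obtain ⟨s₁, hs₁, s₂, hs₂, hne⟩ := hinf'.nontrivial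
    simp only [mem_setOf_eq] at hs₁ hs₂
    have h3 := z_sep ε y z hε hy hzd hne
    have h4 : dist (z s₁) (z s₂) ≤ dist x (z s₁) + dist x (z s₂) := dist_triangle_left _ _ _
    linarith

lemma bridge [Nonempty S] (hε : 0 < ε) (hy : ∀ s t : S, s ≠ t → ε ≤ dist (y s) (y t))
    (hzd : ∀ s, dist (z s) (y s) ≤ ε/16) (x : X) {δ : ℝ} (hδ : 0 < δ) (u v : Set S)
    (hagree : ∀ s, dist x (z s) < infDist x (auxB ε y z) - δ → (s ∈ u ↔ s ∈ v)) :
    infDist x (PhiSet ε y z v) ≤ infDist x (PhiSet ε y z u) + δ := by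
  set dB := infDist x (auxB ε y z) with hdB
  have hBne := auxB_nonempty ε y z (S := S)
  have hvB : infDist x (PhiSet ε y z v) ≤ dB :=
    infDist_le_infDist_of_subset subset_union_left hBne
  by_contra hcon
  push_neg at hcon
  have hlt : infDist x (PhiSet ε y z u) < infDist x (PhiSet ε y z v) - δ := by linarith
  obtain ⟨w, hw, hdw⟩ := (infDist_lt_iff (PhiSet_nonempty ε y z u)).mp hlt
  rcases hw with hwB | ⟨s, hsu, rfl⟩
  · have hle : dB ≤ dist x w := infDist_le_dist_of_mem hwB
    linarith
  · have hT : dist x (z s) < dB - δ := by linarith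
    have hsv : s ∈ v := (hagree s hT).mp hsu
    have : infDist x (PhiSet ε y z v) ≤ dist x (z s) :=
      infDist_le_dist_of_mem (Or.inr ⟨s, hsv, rfl⟩)
    linarith

end Main

section Embed

universe u₁ u₂ u₃

theorem main_aux {X : Type u₁} [MetricSpace X] {I : Type u₂} [Nonempty I] {o : Ordinal.{u₃}}
    (ε : ℝ) (hε : 0 < ε) (y z : I × ↥(Set.Iic o) → X)
    (hy : ∀ s t, s ≠ t → ε ≤ dist (y s) (y t))
    (hzy : ∀ s, z s ≠ y s) (hzd : ∀ s, dist (z s) (y s) ≤ ε/16) :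
    ∃ f : (I → ↥(Set.Iic o)) → CL X,
      @Topology.IsEmbedding _ _ _ (WijsmanTopology X) f := by
  letI tCL : TopologicalSpace (CL X) := WijsmanTopology X
  haveI : Nonempty ↥(Set.Iic o) := ⟨⟨0, zero_le (a := o)⟩⟩
  set u : (I → ↥(Set.Iic o)) → Set (I × ↥(Set.Iic o)) :=
    fun g => {p | (p.2 : Ordinal) < ((g p.1 : ↥(Set.Iic o)) : Ordinal)} with hu
  set f : (I → ↥(Set.Iic o)) → CL X := fun g =>
    ⟨PhiSet ε y z (u g), PhiSet_nonempty ε y z (u g),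
      PhiSet_closed ε y z hε hy hzd (u g)⟩ with hf
  have hfinj : Function.Injective f := by
    intro g h hgh
    have hset : PhiSet ε y z (u g) = PhiSet ε y z (u h) := congrArg Subtype.val hgh
    funext i
    by_contra hne
    have hvne : ((g i : ↥(Set.Iic o)) : Ordinal) ≠ ((h i : ↥(Set.Iic o)) : Ordinal) :=
      fun hv => hne (Subtype.ext hv)
    rcases hvne.lt_or_gt with hlt | hlt
    · have h1 : ((i, g i) : I × ↥(Set.Iic o)) ∈ u h := hlt
      have h2 : z (i, g i) ∈ PhiSet ε y z (u h) :=
        (mem_PhiSet_z_iff ε y z hε hy hzy hzd (u h) _).mpr h1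
      rw [← hset] at h2
      have h3 : ((i, g i) : I × ↥(Set.Iic o)) ∈ u g :=
        (mem_PhiSet_z_iff ε y z hε hy hzy hzd (u g) _).mp h2
      exact lt_irrefl _ (show ((g i : ↥(Set.Iic o)) : Ordinal)
        < ((g i : ↥(Set.Iic o)) : Ordinal) from h3)
    · have h1 : ((i, h i) : I × ↥(Set.Iic o)) ∈ u g := hlt
      have h2 : z (i, h i) ∈ PhiSet ε y z (u g) :=
        (mem_PhiSet_z_iff ε y z hε hy hzy hzd (u g) _).mpr h1
      rw [hset] at h2
      have h3 : ((i, h i) : I × ↥(Set.Iic o)) ∈ u h :=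
        (mem_PhiSet_z_iff ε y z hε hy hzy hzd (u h) _).mp h2
      exact lt_irrefl _ (show ((h i : ↥(Set.Iic o)) : Ordinal)
        < ((h i : ↥(Set.Iic o)) : Ordinal) from h3)
  have hev : ∀ x : X, Continuous fun g : I → ↥(Set.Iic o) =>
      infDist x (PhiSet ε y z (u g)) := by
    intro x
    rw [continuous_iff_continuousAt]
    intro g₀
    rw [ContinuousAt, Metric.tendsto_nhds]
    intro δ hδ
    have hT := finite_bad ε y z hε hy hzd x (show (0:ℝ) < δ/3 by linarith)
    have hWopen : ∀ p : I × ↥(Set.Iic o), IsOpen {ξ : ↥(Set.Iic o) |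
        (((p.2 : Ordinal) < (ξ : Ordinal)) ↔
          ((p.2 : Ordinal) < ((g₀ p.1 : ↥(Set.Iic o)) : Ordinal)))} := by
      intro p
      by_cases hb : (p.2 : Ordinal) < ((g₀ p.1 : ↥(Set.Iic o)) : Ordinal)
      · have heq : {ξ : ↥(Set.Iic o) | (((p.2 : Ordinal) < (ξ : Ordinal)) ↔
            ((p.2 : Ordinal) < ((g₀ p.1 : ↥(Set.Iic o)) : Ordinal)))}
            = Subtype.val ⁻¹' (Set.Ioi (p.2 : Ordinal)) := by
          ext ξ; simp [hb]
        rw [heq]; exact isOpen_Ioi.preimage continuous_subtype_val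
      · have heq : {ξ : ↥(Set.Iic o) | (((p.2 : Ordinal) < (ξ : Ordinal)) ↔
            ((p.2 : Ordinal) < ((g₀ p.1 : ↥(Set.Iic o)) : Ordinal)))}
            = Subtype.val ⁻¹' (Set.Iio ((p.2 : Ordinal) + 1)) := by
          ext ξ
          simp [hb, Order.lt_add_one_iff, not_lt]
        rw [heq]; exact isOpen_Iio.preimage continuous_subtype_val
    have hU : (⋂ p ∈ {s : I × ↥(Set.Iic o) |
          dist x (z s) < infDist x (auxB ε y z) - δ/3},
          (fun g : I → ↥(Set.Iic o) => g p.1) ⁻¹' {ξ : ↥(Set.Iic o) |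
        (((p.2 : Ordinal) < (ξ : Ordinal)) ↔
          ((p.2 : Ordinal) < ((g₀ p.1 : ↥(Set.Iic o)) : Ordinal)))}) ∈ nhds g₀ := by
      refine (Set.Finite.isOpen_biInter hT
        (fun p _ => (hWopen p).preimage (continuous_apply p.1))).mem_nhds ?_
      refine Set.mem_iInter₂.mpr fun p hp => ?_
      exact Iff.rfl
    filter_upwards [hU] with g hg
    have hagree : ∀ s : I × ↥(Set.Iic o),
        dist x (z s) < infDist x (auxB ε y z) - δ/3 → (s ∈ u g ↔ s ∈ u g₀) := by
      intro s hs
      exact Set.mem_iInter₂.mp hg s hs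
    have hb1 := bridge ε y z hε hy hzd x (show (0:ℝ) < δ/3 by linarith)
      (u g) (u g₀) hagree
    have hb2 := bridge ε y z hε hy hzd x (show (0:ℝ) < δ/3 by linarith)
      (u g₀) (u g) (fun s hs => (hagree s hs).symm)
    rw [Real.dist_eq, abs_sub_lt_iff]
    constructor <;> linarith
  haveI hT2 : T2Space (CL X) := by
    refine ⟨fun {A B} hAB => ?_⟩
    have hx : ∃ x₀ : X, infDist x₀ A.1 ≠ infDist x₀ B.1 := by
      by_contra hcc
      push_neg at hcc
      apply hAB
      apply Subtype.ext
      ext w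
      rw [(A.2.2).mem_iff_infDist_zero A.2.1, (B.2.2).mem_iff_infDist_zero B.2.1, hcc w]
    obtain ⟨x₀, hx₀⟩ := hx
    have hevc : Continuous fun A : CL X => infDist x₀ A.1 := by
      have hle : tCL ≤ TopologicalSpace.induced
          (fun A : CL X => infDist x₀ A.1) inferInstance := iInf_le _ x₀
      exact continuous_iff_le_induced.mpr hle
    exact separated_by_continuous hevc hx₀
  haveI : CompactSpace ↥(Set.Iic o) :=
    isCompact_iff_compactSpace.mp (by rw [← Set.Icc_bot]; exact isCompact_Icc)
  have hfc : Continuous f := by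
    show @Continuous _ _ _
      (⨅ x : X, TopologicalSpace.induced
        (fun A : CL X => Metric.infDist x A.1) inferInstance) f
    refine continuous_iInf_rng.mpr fun x => continuous_induced_rng.mpr ?_
    exact hev x
  exact ⟨f, (hfc.isClosedEmbedding hfinj).toIsEmbedding⟩

end Embed

end Stmt16Aux
namespace Stmt16Aux

universe ua ub uw

theorem assemble {X : Type uw} [MetricSpace X]
    (hsep : ¬ TopologicalSpace.SeparableSpace X)
    (hperf : ∀ x : X, (nhdsWithin x {x}ᶜ).NeBot) :
    ∃ f : (Quotient.out (Cardinal.aleph 1 : Cardinal.{ua})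
        → Set.Iic (Cardinal.aleph 1 : Cardinal.{ub}).ord) → CL X,
      @Topology.IsEmbedding _ _ _ (WijsmanTopology X) f := by
  classical
  obtain ⟨ε, hε, Y, hYc, hYp⟩ := Stmt16Aux.exists_sep hsep
  -- `Y` has at least `ℵ₁` elements
  have h1 : (Cardinal.aleph 1 : Cardinal.{uw}) ≤ Cardinal.mk ↥Y := by
    refine le_of_not_gt fun hlt => hYc ?_
    exact (Cardinal.countable_iff_lt_aleph_one Y).mpr hlt
  -- the slot type has at most `ℵ₁` elements
  have hmkK : Cardinal.mk ↥(Set.Iic (Cardinal.aleph 1 : Cardinal.{ub}).ord)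
      ≤ Cardinal.lift.{ub+1} (Cardinal.aleph 1 : Cardinal.{ub}) := by
    have hsub : Set.Iic (Cardinal.aleph 1 : Cardinal.{ub}).ord
        ⊆ Set.Iio ((Cardinal.aleph 1 : Cardinal.{ub}).ord + 1) := by
      intro ξ hξ
      rw [Set.mem_Iio, Ordinal.add_one_eq_succ]
      exact Order.lt_succ_iff.mpr hξ
    calc Cardinal.mk ↥(Set.Iic (Cardinal.aleph 1 : Cardinal.{ub}).ord)
        ≤ Cardinal.mk ↥(Set.Iio ((Cardinal.aleph 1 : Cardinal.{ub}).ord + 1)) :=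
          Cardinal.mk_le_mk_of_subset hsub
      _ = Cardinal.lift.{ub+1} ((Cardinal.aleph 1 : Cardinal.{ub}).ord + 1).card :=
          Ordinal.mk_Iio_ordinal _
      _ = Cardinal.lift.{ub+1} (Cardinal.aleph 1 : Cardinal.{ub}) := by
          rw [Ordinal.card_add, Cardinal.card_ord, Ordinal.card_one,
            Cardinal.add_one_eq (Cardinal.aleph0_le_aleph 1)]
  have hprod : Cardinal.mk ((Quotient.out (Cardinal.aleph 1 : Cardinal.{ua}))
      × ↥(Set.Iic (Cardinal.aleph 1 : Cardinal.{ub}).ord))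
      ≤ (Cardinal.aleph 1 : Cardinal.{max ua (ub+1)}) := by
    rw [Cardinal.mk_prod, Cardinal.mk_out]
    calc Cardinal.lift.{ub+1} (Cardinal.aleph 1 : Cardinal.{ua})
          * Cardinal.lift.{ua} (Cardinal.mk ↥(Set.Iic (Cardinal.aleph 1 : Cardinal.{ub}).ord))
        ≤ Cardinal.lift.{ub+1} (Cardinal.aleph 1 : Cardinal.{ua})
          * Cardinal.lift.{ua} (Cardinal.lift.{ub+1} (Cardinal.aleph 1 : Cardinal.{ub})) :=
          mul_le_mul' le_rfl (Cardinal.lift_le.mpr hmkK)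
      _ = (Cardinal.aleph 1 : Cardinal.{max ua (ub+1)}) := by
          simp only [Cardinal.lift_aleph, Cardinal.lift_lift, Ordinal.lift_one]
          exact Cardinal.mul_eq_self (Cardinal.aleph0_le_aleph 1)
  have hinj : Nonempty (((Quotient.out (Cardinal.aleph 1 : Cardinal.{ua}))
      × ↥(Set.Iic (Cardinal.aleph 1 : Cardinal.{ub}).ord)) ↪ ↥Y) := by
    rw [← Cardinal.lift_mk_le']
    have e1 : Cardinal.lift.{uw} (Cardinal.aleph 1 : Cardinal.{max ua (ub+1)})
        = Cardinal.lift.{max ua (ub+1)} (Cardinal.aleph 1 : Cardinal.{uw}) := by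
      simp only [Cardinal.lift_aleph, Ordinal.lift_one]
    calc Cardinal.lift.{uw} (Cardinal.mk ((Quotient.out (Cardinal.aleph 1 : Cardinal.{ua}))
          × ↥(Set.Iic (Cardinal.aleph 1 : Cardinal.{ub}).ord)))
        ≤ Cardinal.lift.{uw} (Cardinal.aleph 1 : Cardinal.{max ua (ub+1)}) :=
          Cardinal.lift_le.mpr hprod
      _ = Cardinal.lift.{max ua (ub+1)} (Cardinal.aleph 1 : Cardinal.{uw}) := e1
      _ ≤ Cardinal.lift.{max ua (ub+1)} (Cardinal.mk ↥Y) := Cardinal.lift_le.mpr h1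
  obtain ⟨j⟩ := hinj
  -- choose nearby distinct points using perfectness
  have hzx : ∀ w : X, ∃ v : X, v ≠ w ∧ dist v w ≤ ε/16 := by
    intro w
    have hb : Metric.ball w (ε/16) ∈ nhdsWithin w {w}ᶜ :=
      mem_nhdsWithin_of_mem_nhds (Metric.ball_mem_nhds w (by linarith))
    obtain ⟨v, hv⟩ := (hperf w).nonempty_of_mem (Filter.inter_mem hb self_mem_nhdsWithin)
    exact ⟨v, hv.2, le_of_lt (Metric.mem_ball.mp hv.1)⟩
  choose zf hz1 hz2 using hzx
  haveI : Nonempty (Quotient.out (Cardinal.aleph 1 : Cardinal.{ua})) := by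
    refine Cardinal.mk_ne_zero_iff.mp ?_
    rw [Cardinal.mk_out]
    exact (lt_of_lt_of_le Cardinal.aleph0_pos (Cardinal.aleph0_le_aleph 1)).ne'
  set yfun : (Quotient.out (Cardinal.aleph 1 : Cardinal.{ua}))
      × ↥(Set.Iic (Cardinal.aleph 1 : Cardinal.{ub}).ord) → X :=
    fun s => ((j s : ↥Y) : X) with hyfun
  have hy : ∀ s t, s ≠ t → ε ≤ dist (yfun s) (yfun t) := by
    intro s t hst
    exact hYp (j s).2 (j t).2 (fun hval => hst (j.injective (Subtype.ext hval)))
  exact Stmt16Aux.main_aux ε hε yfun (fun s => zf (yfun s)) hy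
    (fun s => hz1 (yfun s)) (fun s => hz2 (yfun s))

end Stmt16Aux

/-- If `(X,d)` is a non-separable perfect metric space (no isolated points), then
`(ω₁ + 1)^{ω₁}` embeds into `(CL X, τ_{w(d)})`. -/
theorem stmt_16 {X : Type*} [MetricSpace X]
    (hsep : ¬ TopologicalSpace.SeparableSpace X)
    (hperf : ∀ x : X, (nhdsWithin x {x}ᶜ).NeBot) :
    ∃ f : (Quotient.out (Cardinal.aleph 1) → Set.Iic (Cardinal.aleph 1).ord) → CL X,
      @Topology.IsEmbedding _ _ _ (WijsmanTopology X) f :=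
  Stmt16Aux.assemble hsep hperf
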